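/- Let k be a field and D = k[X₁,…,X_m,Y,Z,T]/(X₁^{r₁}⋯X_m^{r_m}Y − G) where G ∈ k[X₁,…,X_m,Z,T] is nonzero and not divisible by X_j for any j. Then D is an integral domain. -/

import Mathlib

open Polynomial in
/-- A linear polynomial `c•X - g` with `c ≠ 0` whose coefficients have no common
non-unit factor is irreducible. -/
theorem linear_irreducible_aux {R : Type*} [CommRing R] [IsDomain R] {c g : R} (hc : c ≠ 0)
    (hprim : ∀ a : R, a ∣ c → a ∣ g → IsUnit a) :
    Irreducible (Polynomial.C c * Polynomial.X - Polynomial.C g) := by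
  set f : R[X] := Polynomial.C c * Polynomial.X - Polynomial.C g with hf
  have hfeq : f = Polynomial.C c * Polynomial.X + Polynomial.C (-g) := by
    rw [map_neg]; ring
  have hdeg : f.natDegree = 1 := by rw [hfeq, natDegree_linear hc]
  have hf0 : f ≠ 0 := by
    intro h; rw [h] at hdeg; simp at hdeg
  have hCdvd : ∀ a₀ : R, Polynomial.C a₀ ∣ f → IsUnit a₀ := by
    intro a₀ hdvd
    rw [Polynomial.C_dvd_iff_dvd_coeff] at hdvd
    have h1 : a₀ ∣ c := by simpa [hfeq] using hdvd 1
    have h0 : a₀ ∣ g := by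
      have := hdvd 0
      simp only [hfeq, Polynomial.coeff_add, Polynomial.mul_coeff_zero,
        Polynomial.coeff_C_zero, Polynomial.coeff_X_zero, mul_zero, zero_add] at this
      exact (dvd_neg.mp this)
    exact hprim a₀ h1 h0
  constructor
  · exact Polynomial.not_isUnit_of_natDegree_pos f (by omega)
  · intro a b hab
    have ha0 : a ≠ 0 := by rintro rfl; simp at hab; exact hf0 hab
    have hb0 : b ≠ 0 := by rintro rfl; simp at hab; exact hf0 hab
    have hsum : a.natDegree + b.natDegree = 1 := by
      rw [← Polynomial.natDegree_mul ha0 hb0, ← hab, hdeg]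
    rcases Nat.eq_zero_or_pos a.natDegree with ha | ha
    · left
      have haC : a = Polynomial.C (a.coeff 0) := Polynomial.eq_C_of_natDegree_eq_zero ha
      have : IsUnit (a.coeff 0) := hCdvd _ ⟨b, by rw [← haC, hab]⟩
      rw [haC]; exact this.map Polynomial.C
    · right
      have hb : b.natDegree = 0 := by omega
      have hbC : b = Polynomial.C (b.coeff 0) := Polynomial.eq_C_of_natDegree_eq_zero hb
      have : IsUnit (b.coeff 0) := hCdvd _ ⟨a, by rw [← hbC, hab, mul_comm]⟩
      rw [hbC]; exact this.map Polynomial.C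

open MvPolynomial in
/-- `X i` is prime in a multivariate polynomial ring over a domain. -/
theorem mvPolynomial_prime_X_aux {k : Type*} [CommRing k] [IsDomain k] {σ : Type*}
    [DecidableEq σ] (i : σ) : Prime (X i : MvPolynomial σ k) := by
  let e : σ ≃ Option {b : σ // b ≠ i} := (Equiv.optionSubtypeNe i).symm
  let φ := (renameEquiv k e).trans (optionEquivLeft k {b : σ // b ≠ i})
  rw [← MulEquiv.prime_iff φ]
  show Prime (φ (X i))
  have : φ (X i) = Polynomial.X := by
    simp only [φ, AlgEquiv.trans_apply, renameEquiv_apply, rename_X]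
    have : e i = none := by simp [e]
    rw [this, optionEquivLeft_X_none]
  rw [this]
  exact Polynomial.prime_X

open MvPolynomial in
/-- If `G ∈ k[X₁,…,X_m,Z,T]` is nonzero and not divisible by any `X_j`, then
`D = k[X₁,…,X_m,Y,Z,T]/(X₁^{r₁}⋯X_m^{r_m}Y − G)` is an integral domain.
Here `Sum.inr 0 = Y`, `Sum.inr 1 = Z`, `Sum.inr 2 = T`. -/
theorem asanuma_ring_isDomain
    {k : Type*} [Field k] (m : ℕ) (r : Fin m → ℕ) (hr : ∀ j, 1 < r j)
    (G : MvPolynomial (Fin m ⊕ Fin 2) k) (hG : G ≠ 0)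
    (hdvd : ∀ j : Fin m, ¬ (X (Sum.inl j) : MvPolynomial (Fin m ⊕ Fin 2) k) ∣ G) :
    IsDomain (MvPolynomial (Fin m ⊕ Fin 3) k ⧸
      Ideal.span {(∏ j : Fin m, X (Sum.inl j) ^ r j) * X (Sum.inr 0)
        - rename (Sum.map id Fin.succ) G}) := by
  set f : MvPolynomial (Fin m ⊕ Fin 3) k :=
    (∏ j : Fin m, X (Sum.inl j) ^ r j) * X (Sum.inr 0) - rename (Sum.map id Fin.succ) G with hfdef
  -- the variable equivalence splitting off Y
  let e : (Fin m ⊕ Fin 3) ≃ Option (Fin m ⊕ Fin 2) :=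
    { toFun := fun x => match x with
        | .inl j => some (.inl j)
        | .inr i => Fin.cases none (fun i' => some (.inr i')) i
      invFun := fun x => match x with
        | none => .inr 0
        | some (.inl j) => .inl j
        | some (.inr i) => .inr i.succ
      left_inv := by
        rintro (j | i)
        · rfl
        · refine Fin.cases rfl (fun i' => ?_) i
          simp
      right_inv := by
        rintro (_ | (j | i)) <;> simp }
  let φ := (renameEquiv k e).trans (optionEquivLeft k (Fin m ⊕ Fin 2))
  have he_comp : ∀ p : MvPolynomial (Fin m ⊕ Fin 2) k, φ (rename (Sum.map id Fin.succ) p) = Polynomial.C p := by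
    intro p
    have h1 : (rename e) ((rename (Sum.map id Fin.succ)) p) = rename some p := by
      rw [rename_rename]
      have hfun : ⇑e ∘ Sum.map id Fin.succ = (some : (Fin m ⊕ Fin 2) → _) := by
        funext x
        rcases x with j | i
        · rfl
        · show e (Sum.inr i.succ) = some (Sum.inr i)
          simp [e]
      rw [hfun]
    have h2 : ∀ q : MvPolynomial (Fin m ⊕ Fin 2) k,
        (optionEquivLeft k (Fin m ⊕ Fin 2)) (rename some q) = Polynomial.C q := by
      have key : ((optionEquivLeft k (Fin m ⊕ Fin 2)).toAlgHom.comp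
            (rename (R := k) (some : (Fin m ⊕ Fin 2) → Option (Fin m ⊕ Fin 2)))) =
          IsScalarTower.toAlgHom k (MvPolynomial (Fin m ⊕ Fin 2) k)
            (Polynomial (MvPolynomial (Fin m ⊕ Fin 2) k)) :=
        MvPolynomial.algHom_ext fun i => by
          simp [optionEquivLeft_X_some, IsScalarTower.toAlgHom_apply,
            Polynomial.algebraMap_apply, algebraMap_eq]
      intro q
      have := DFunLike.congr_fun key q
      simpa [Polynomial.algebraMap_apply, algebraMap_eq] using this
    simp only [φ, AlgEquiv.trans_apply, renameEquiv_apply, h1, h2]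
  set c : MvPolynomial (Fin m ⊕ Fin 2) k := ∏ j : Fin m, X (Sum.inl j) ^ r j with hc
  have hc0 : c ≠ 0 := by
    apply Finset.prod_ne_zero_iff.mpr
    intro j _
    exact pow_ne_zero _ (X_ne_zero _)
  have hφf : φ f = Polynomial.C c * Polynomial.X - Polynomial.C G := by
    rw [hfdef, map_sub, map_mul, map_prod, he_comp]
    congr 1
    have hY : φ (X (Sum.inr 0) : MvPolynomial (Fin m ⊕ Fin 3) k) = Polynomial.X := by
      simp only [φ, AlgEquiv.trans_apply, renameEquiv_apply, rename_X]
      have : e (Sum.inr 0) = none := rfl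
      rw [this, optionEquivLeft_X_none]
    have hXj : ∀ j : Fin m, φ (X (Sum.inl j) : MvPolynomial (Fin m ⊕ Fin 3) k)
        = Polynomial.C (X (Sum.inl j) : MvPolynomial (Fin m ⊕ Fin 2) k) := by
      intro j
      simp only [φ, AlgEquiv.trans_apply, renameEquiv_apply, rename_X]
      have : e (Sum.inl j) = some (Sum.inl j) := rfl
      rw [this, optionEquivLeft_X_some]
    rw [hY, hc, map_prod]
    congr 1
    funext
    apply Finset.prod_congr rfl
    intro j _
    rw [map_pow, hXj, ← Polynomial.C_pow]
  have hprim : ∀ a : MvPolynomial (Fin m ⊕ Fin 2) k, a ∣ c → a ∣ G → IsUnit a := by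
    intro a hac haG
    by_contra hu
    have ha0 : a ≠ 0 := by rintro rfl; exact hc0 (zero_dvd_iff.mp hac)
    obtain ⟨p, hpirr, hpa⟩ := WfDvdMonoid.exists_irreducible_factor hu ha0
    have hp : Prime p := UniqueFactorizationMonoid.irreducible_iff_prime.mp hpirr
    obtain ⟨j, _, hpj⟩ := hp.exists_mem_finset_dvd (hpa.trans hac)
    have hpXj : p ∣ X (Sum.inl j) := hp.dvd_of_dvd_pow hpj
    have hXprime : Prime (X (Sum.inl j) : MvPolynomial (Fin m ⊕ Fin 2) k) := mvPolynomial_prime_X_aux _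
    have hassoc : Associated p (X (Sum.inl j) : MvPolynomial (Fin m ⊕ Fin 2) k) :=
      hpirr.associated_of_dvd hXprime.irreducible hpXj
    exact hdvd j (hassoc.symm.dvd.trans (hpa.trans haG))
  have hirr : Irreducible (φ f) := by
    rw [hφf]; exact linear_irreducible_aux hc0 hprim
  have hprime : Prime f := by
    rw [← MulEquiv.prime_iff φ]
    exact UniqueFactorizationMonoid.irreducible_iff_prime.mp hirr
  haveI : (Ideal.span {f}).IsPrime := (Ideal.span_singleton_prime hprime.ne_zero).mpr hprime
  exact Ideal.Quotient.isDomain _
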